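/- Let G be a unimodular locally compact second countable group with Haar measure m, acting on itself by left translations, let (Ω, ℙ) be a probability space with a measure-preserving measurable G-action, and let Λ : Ω → Measure(G) be a stationary point process which is locally square integrable, i.e. E[Λ(B)²] < ∞ for every bounded Borel set B. Let b : G → [0, ∞) be a bounded measurable function with bounded support and ∫_G b dm = 1, and let f, g : G → ℂ be bounded measurable functions with bounded support. Then E[ ∫_G ∫_G (f^⋆ ⋆ g)(x⁻¹y) b(x) dΛ(y) dΛ(x) ] = E[ conj(Λ(f)) · Λ(g) ], where f^⋆(x) := conj(f(x⁻¹)), (f^⋆ ⋆ g)(x) := ∫_G f^⋆(t) g(t⁻¹x) dm(t), and Λ(f)(ω) := ∫_G f dΛ_ω. -/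

import Mathlib

open MeasureTheory ENNReal

open ProbabilityTheory in
private lemma aux_sfinite {α β : Type*} [MeasurableSpace α] [MeasurableSpace β]
    (κ : Kernel α β) (hfin : ∀ a, κ a Set.univ < ⊤) :
    IsSFiniteKernel κ := by
  classical
  have hmeas : Measurable fun a => κ a Set.univ := κ.measurable_coe MeasurableSet.univ
  have hsets : ∀ j : ℕ, MeasurableSet {a | (j : ℝ≥0∞) ≤ κ a Set.univ ∧ κ a Set.univ < j + 1} := by
    intro j
    have h : {a | (j : ℝ≥0∞) ≤ κ a Set.univ ∧ κ a Set.univ < j + 1}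
        = (fun a => κ a Set.univ) ⁻¹' (Set.Ico (j : ℝ≥0∞) ((j : ℝ≥0∞) + 1)) := rfl
    rw [h]; exact hmeas measurableSet_Ico
  refine ⟨⟨fun j => Kernel.piecewise (hsets j) κ 0, fun j => ?_, ?_⟩⟩
  · refine ⟨(j : ℝ≥0∞) + 1, ?_, fun a => ?_⟩
    · exact ENNReal.add_lt_top.2 ⟨ENNReal.natCast_lt_top j, ENNReal.one_lt_top⟩
    · rw [Kernel.piecewise_apply]
      split_ifs with h
      · simp only [Set.mem_setOf_eq] at h
        exact h.2.le
      · simp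
  · refine Kernel.ext fun a => Measure.ext fun s hs => ?_
    rw [Kernel.sum_apply' _ _ hs]
    have hr := (hfin a).ne
    obtain ⟨j₀, hj₀⟩ : ∃ j₀ : ℕ, (j₀ : ℝ≥0∞) ≤ κ a Set.univ ∧ κ a Set.univ < (j₀ : ℝ≥0∞) + 1 := by
      refine ⟨⌊(κ a Set.univ).toReal⌋₊, ?_, ?_⟩
      · conv_rhs => rw [← ENNReal.ofReal_toReal hr]
        rw [← ENNReal.ofReal_natCast]
        exact ENNReal.ofReal_le_ofReal (Nat.floor_le ENNReal.toReal_nonneg)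
      · conv_lhs => rw [← ENNReal.ofReal_toReal hr]
        have h2 : ((⌊(κ a Set.univ).toReal⌋₊ : ℝ≥0∞) + 1 : ℝ≥0∞)
            = ENNReal.ofReal ((⌊(κ a Set.univ).toReal⌋₊ : ℝ) + 1) := by
          rw [ENNReal.ofReal_add (Nat.cast_nonneg _) zero_le_one, ENNReal.ofReal_natCast,
            ENNReal.ofReal_one]
        rw [h2]
        exact (ENNReal.ofReal_lt_ofReal_iff (by positivity)).2 (Nat.lt_floor_add_one _)
    have huniq : ∀ j : ℕ, j ≠ j₀ → (Kernel.piecewise (hsets j) κ 0) a s = 0 := by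
      intro j hj
      rw [Kernel.piecewise_apply']
      split_ifs with h
      · exfalso
        simp only [Set.mem_setOf_eq] at h
        have h1 : j < j₀ + 1 := by exact_mod_cast lt_of_le_of_lt h.1 hj₀.2
        have h2 : j₀ < j + 1 := by exact_mod_cast lt_of_le_of_lt hj₀.1 h.2
        omega
      · simp
    rw [tsum_eq_single j₀ huniq, Kernel.piecewise_apply']
    simp only [Set.mem_setOf_eq]
    rw [if_pos hj₀]

private lemma aux_integrable {α : Type*} [MeasurableSpace α] {ν : Measure α}
    {F : α → ℂ} (hF : AEStronglyMeasurable F ν) {T : Set α}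
    (hT : MeasurableSet T) (hνT : ν T < ⊤) {C : ℝ}
    (hbound : ∀ᵐ z ∂ν, ‖F z‖ ≤ T.indicator (fun _ => C) z) :
    Integrable F ν := by
  refine Integrable.mono' ?_ hF hbound
  exact (integrableOn_const hνT.ne).integrable_indicator hT

private lemma aux_norm_int {α : Type*} [MeasurableSpace α] {ν : Measure α}
    (F : α → ℂ) {C : ℝ} (hC : ∀ z, ‖F z‖ ≤ C) {T : Set α} (hT : MeasurableSet T)
    (hsupp : ∀ z, z ∉ T → F z = 0) (hνT : ν T < ⊤) :
    ‖∫ z, F z ∂ν‖ ≤ C * (ν T).toReal := by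
  rw [← setIntegral_eq_integral_of_forall_compl_eq_zero hsupp]
  exact norm_setIntegral_le_of_norm_le_const hνT fun x _ => hC x

open ProbabilityTheory (Kernel IsSFiniteKernel) in
open ComplexConjugate in
open scoped Pointwise in
/-- For a locally square integrable stationary point process `Λ` on a
unimodular lcsc group `G` with Haar measure `m`, for every bounded measurable `b ≥ 0` with
bounded support and `∫ b dm = 1` and all bounded measurable `f, g` with bounded support,
`E[ ∫∫ (f^⋆ ⋆ g)(x⁻¹y) b(x) dΛ(y) dΛ(x) ] = E[ conj(Λ(f)) · Λ(g) ]`. -/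
theorem statement3
    {G Ω : Type*} [Group G] [TopologicalSpace G] [IsTopologicalGroup G]
    [LocallyCompactSpace G] [SecondCountableTopology G]
    [MeasurableSpace G] [BorelSpace G]
    (m : Measure G) [m.IsHaarMeasure] [m.IsMulRightInvariant]
    [MeasurableSpace Ω] (ℙ : Measure Ω) [IsProbabilityMeasure ℙ]
    [MulAction G Ω]
    (hact : ∀ g : G, Measurable fun ω : Ω => g • ω)
    (hpres : ∀ g : G, MeasurePreserving (fun ω : Ω => g • ω) ℙ ℙ)
    (Λ : Ω → Measure G)
    (hΛmeas : ∀ B : Set G, MeasurableSet B → Measurable fun ω => Λ ω B)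
    (hequiv : ∀ (g : G) (ω : Ω), Λ (g • ω) = Measure.map (fun x => g * x) (Λ ω))
    (hL2 : ∀ B : Set G, MeasurableSet B → (∃ K : Set G, IsCompact K ∧ B ⊆ K) →
      ∫⁻ ω, (Λ ω B) ^ 2 ∂ℙ < ⊤)
    (b : G → ℝ) (hb_meas : Measurable b) (hb_nonneg : ∀ x, 0 ≤ b x)
    (hb_bdd : ∃ C : ℝ, ∀ x, b x ≤ C)
    (hb_supp : ∃ K : Set G, IsCompact K ∧ Function.support b ⊆ K)
    (hb_int : ∫ x, b x ∂m = 1)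
    (f g : G → ℂ) (hf_meas : Measurable f) (hg_meas : Measurable g)
    (hf_bdd : ∃ C : ℝ, ∀ x, ‖f x‖ ≤ C) (hg_bdd : ∃ C : ℝ, ∀ x, ‖g x‖ ≤ C)
    (hf_supp : ∃ K : Set G, IsCompact K ∧ Function.support f ⊆ K)
    (hg_supp : ∃ K : Set G, IsCompact K ∧ Function.support g ⊆ K) :
    ∫ ω, (∫ x, (∫ y, (∫ t, (starRingEnd ℂ) (f t⁻¹) * g (t⁻¹ * (x⁻¹ * y)) ∂m)
          ∂(Λ ω)) * (b x : ℂ) ∂(Λ ω)) ∂ℙ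
      = ∫ ω, (starRingEnd ℂ) (∫ x, f x ∂(Λ ω)) * (∫ x, g x ∂(Λ ω)) ∂ℙ := by
  classical
  obtain ⟨Cb, hCb⟩ := hb_bdd
  obtain ⟨Cf, hCf⟩ := hf_bdd
  obtain ⟨Cg, hCg⟩ := hg_bdd
  obtain ⟨Kb, hKbc, hKbs⟩ := hb_supp
  obtain ⟨Kf, hKfc, hKfs⟩ := hf_supp
  obtain ⟨Kg, hKgc, hKgs⟩ := hg_supp
  have hCf0 : 0 ≤ Cf := le_trans (norm_nonneg _) (hCf 1)
  have hCg0 : 0 ≤ Cg := le_trans (norm_nonneg _) (hCg 1)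
  have hCb0 : 0 ≤ Cb := le_trans (hb_nonneg 1) (hCb 1)
  have hconj_meas : Measurable fun z : ℂ => conj z := RCLike.continuous_conj.measurable
  have hbnorm : ∀ x, ‖(b x : ℂ)‖ ≤ Cb := fun x => by
    rw [Complex.norm_real, Real.norm_eq_abs, abs_of_nonneg (hb_nonneg x)]; exact hCb x
  -- compact exhaustion and a "measurable compact neighborhood" gadget
  let K : CompactExhaustion G := CompactExhaustion.choice G
  have gadget : ∀ C : Set G, IsCompact C →
      ∃ T : Set G, MeasurableSet T ∧ C ⊆ T ∧ ∃ D : Set G, IsCompact D ∧ T ⊆ D := by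
    intro C hC
    obtain ⟨n, hn⟩ := K.exists_superset_of_isCompact hC
    exact ⟨interior (K (n + 1)), isOpen_interior.measurableSet,
      hn.trans (K.subset_interior_succ n), K (n + 1), K.isCompact _, interior_subset⟩
  -- the sets S and L
  obtain ⟨S, hSmeas, hSsub, DS, hDSc, hSDS⟩ := gadget (Kb * Kf⁻¹) (hKbc.mul hKfc.inv)
  obtain ⟨L, hLmeas, hLsub, DL, hDLc, hLDL⟩ :=
    gadget (Kb ∪ (DS * Kg ∪ (Kf ∪ Kg)))
      (hKbc.union (((hDSc.mul hKgc).union (hKfc.union hKgc))))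
  have hKbL : Kb ⊆ L := fun x hx => hLsub (Or.inl hx)
  have hSKgL : S * Kg ⊆ L := fun x hx => by
    refine hLsub (Or.inr (Or.inl ?_))
    exact Set.mul_subset_mul_right hSDS hx
  have hKfL : Kf ⊆ L := fun x hx => hLsub (Or.inr (Or.inr (Or.inl hx)))
  have hKgL : Kg ⊆ L := fun x hx => hLsub (Or.inr (Or.inr (Or.inr hx)))
  have hmS : m S < ⊤ := lt_of_le_of_lt (measure_mono hSDS) hDSc.measure_lt_top
  haveI : IsFiniteMeasure (m.restrict S) := ⟨by rwa [Measure.restrict_apply_univ]⟩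
  -- the good set A
  set U : ℕ → Set G := fun n => interior (K (n + 1)) with hU
  have hUmeas : ∀ n, MeasurableSet (U n) := fun n => isOpen_interior.measurableSet
  set A : Set Ω := {ω | ∀ n, Λ ω (U n) < ⊤} with hA
  have hAmeas : MeasurableSet A := by
    have h : A = ⋂ n, (fun ω => Λ ω (U n)) ⁻¹' (Set.Iio ⊤) := by
      rw [hA]; ext ω; simp
    rw [h]
    exact MeasurableSet.iInter fun n => (hΛmeas _ (hUmeas n)) measurableSet_Iio
  have hAae : ∀ᵐ ω ∂ℙ, ω ∈ A := by
    have h : ∀ n : ℕ, ∀ᵐ ω ∂ℙ, Λ ω (U n) < ⊤ := by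
      intro n
      have h2 := hL2 (U n) (hUmeas n) ⟨K (n + 1), K.isCompact _, interior_subset⟩
      have h3 := ae_lt_top ((hΛmeas _ (hUmeas n)).pow_const 2) h2.ne
      filter_upwards [h3] with ω hω
      by_contra hcon
      push_neg at hcon
      rw [top_le_iff.mp hcon] at hω
      exact absurd hω (by simp [pow_two])
    exact ae_all_iff.mpr h
  have hAfin : ∀ ω ∈ A, ∀ C : Set G, IsCompact C → Λ ω C < ⊤ := by
    intro ω hω C hC
    obtain ⟨n, hn⟩ := K.exists_superset_of_isCompact hC
    exact lt_of_le_of_lt (measure_mono (hn.trans (K.subset_interior_succ n))) (hω n)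
  have hAsig : ∀ ω ∈ A, SigmaFinite (Λ ω) := by
    intro ω hω
    refine ⟨⟨⟨fun n => U n, fun _ => trivial, fun n => hω n, ?_⟩⟩⟩
    apply Set.eq_univ_of_univ_subset
    rw [← K.iUnion_eq]
    exact Set.iUnion_mono fun n => (K.subset_interior_succ n).trans (by rfl)
  have hΛL : ∀ ω ∈ A, Λ ω L < ⊤ := fun ω hω =>
    lt_of_le_of_lt (measure_mono hLDL) (hAfin ω hω DL hDLc)
  -- the kernel κ
  set κfun : Ω → Measure G := fun ω => if ω ∈ A then (Λ ω).restrict L else 0 with hκfun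
  have hκfun_meas : Measurable κfun := by
    refine Measure.measurable_of_measurable_coe _ fun s hs => ?_
    have h : (fun ω => κfun ω s) = fun ω => if ω ∈ A then Λ ω (s ∩ L) else 0 := by
      ext ω
      simp only [hκfun]
      split_ifs with h
      · simp only [if_pos h, Measure.restrict_apply hs]
      · simp only [if_neg h, Measure.coe_zero, Pi.zero_apply]
    rw [h]
    exact Measurable.ite hAmeas (hΛmeas _ (hs.inter hLmeas)) measurable_const
  set κ : Kernel Ω G := ⟨κfun, hκfun_meas⟩ with hκdef
  have hκ_apply : ∀ ω, κ ω = κfun ω := fun _ => rfl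
  have hκfin : ∀ ω, κ ω Set.univ < ⊤ := by
    intro ω
    rw [hκ_apply]
    simp only [hκfun]
    split_ifs with h
    · rw [Measure.restrict_apply_univ]; exact hΛL ω h
    · simp
  haveI hκsf : IsSFiniteKernel κ := aux_sfinite κ hκfin
  -- transfer of integrals between κ and Λ
  have hκint : ∀ ω, ω ∈ A → ∀ F : G → ℂ, (∀ z, z ∉ L → F z = 0) →
      ∫ z, F z ∂(κ ω) = ∫ z, F z ∂(Λ ω) := by
    intro ω hω F hF
    rw [hκ_apply]
    simp only [hκfun, if_pos hω]
    exact setIntegral_eq_integral_of_forall_compl_eq_zero hF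
  -- the functions P and Q
  set P : G → Ω → ℂ := fun s ω =>
    (∫ y, g (s⁻¹ * y) ∂(Λ ω)) * ∫ x, conj (f (s⁻¹ * x)) * (b x : ℂ) ∂(Λ ω) with hPdef
  set Q : G → Ω → ℂ := fun s ω =>
    (∫ y, g y ∂(Λ ω)) * ∫ x, conj (f x) * (b (s * x) : ℂ) ∂(Λ ω) with hQdef
  set Pκ : Ω × G → ℂ := fun z =>
    (∫ y, g (z.2⁻¹ * y) ∂(κ z.1)) * ∫ x, conj (f (z.2⁻¹ * x)) * (b x : ℂ) ∂(κ z.1) with hPκdef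
  set Qκ : Ω × G → ℂ := fun z =>
    (∫ y, g y ∂(κ z.1)) * ∫ x, conj (f x) * (b (z.2 * x) : ℂ) ∂(κ z.1) with hQκdef
  -- support facts
  have hg_supp' : ∀ s : G, s ∈ S → ∀ y : G, y ∉ L → g (s⁻¹ * y) = 0 := by
    intro s hs y hy
    by_contra hne
    refine hy (hSKgL ?_)
    have h1 : s⁻¹ * y ∈ Kg := hKgs hne
    have h2 : y = s * (s⁻¹ * y) := by group
    rw [h2]
    exact Set.mul_mem_mul hs h1
  have hfb_supp' : ∀ s : G, ∀ x : G, x ∉ L → conj (f (s⁻¹ * x)) * (b x : ℂ) = 0 := by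
    intro s x hx
    have hbx : b x = 0 := by
      by_contra hne
      exact hx (hKbL (hKbs hne))
    rw [hbx]; simp
  have hgL_supp : ∀ y : G, y ∉ L → g y = 0 := by
    intro y hy
    by_contra hne
    exact hy (hKgL (hKgs hne))
  have hfbs_supp : ∀ s : G, ∀ x : G, x ∉ L → conj (f x) * (b (s * x) : ℂ) = 0 := by
    intro s x hx
    have hfx : f x = 0 := by
      by_contra hne
      exact hx (hKfL (hKfs hne))
    rw [hfx]; simp
  -- equality of P and Pκ on A ×ˢ S, and of Q and Qκ on A
  have hPPκ : ∀ z : Ω × G, z.1 ∈ A → z.2 ∈ S → P z.2 z.1 = Pκ z := by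
    intro z hz1 hz2
    simp only [hPdef, hPκdef]
    rw [hκint z.1 hz1 _ (hg_supp' z.2 hz2), hκint z.1 hz1 _ (hfb_supp' z.2)]
  have hQQκ : ∀ z : Ω × G, z.1 ∈ A → Q z.2 z.1 = Qκ z := by
    intro z hz1
    simp only [hQdef, hQκdef]
    rw [hκint z.1 hz1 _ hgL_supp, hκint z.1 hz1 _ (hfbs_supp z.2)]
  -- strong measurability of Pκ and Qκ
  have hPκ_sm : StronglyMeasurable Pκ := by
    simp only [hPκdef]
    have h1 : StronglyMeasurable fun z : Ω × G => ∫ y, g (z.2⁻¹ * y) ∂(κ z.1) := by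
      exact MeasureTheory.StronglyMeasurable.integral_kernel_prod_right'
        (κ := κ.prodMkRight G)
        (f := fun q : (Ω × G) × G => g (q.1.2⁻¹ * q.2))
        (hg_meas.comp ((measurable_fst.snd.inv).mul measurable_snd)).stronglyMeasurable
    have h2 : StronglyMeasurable fun z : Ω × G =>
        ∫ x, conj (f (z.2⁻¹ * x)) * (b x : ℂ) ∂(κ z.1) := by
      exact MeasureTheory.StronglyMeasurable.integral_kernel_prod_right'
        (κ := κ.prodMkRight G)
        (f := fun q : (Ω × G) × G => conj (f (q.1.2⁻¹ * q.2)) * (b q.2 : ℂ))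
        (((hconj_meas.comp (hf_meas.comp ((measurable_fst.snd.inv).mul measurable_snd))).mul
          (Complex.measurable_ofReal.comp (hb_meas.comp measurable_snd))).stronglyMeasurable)
    exact h1.mul h2
  have hQκ_sm : StronglyMeasurable Qκ := by
    simp only [hQκdef]
    have h1 : StronglyMeasurable fun z : Ω × G => ∫ y, g y ∂(κ z.1) := by
      exact MeasureTheory.StronglyMeasurable.integral_kernel_prod_right'
        (κ := κ.prodMkRight G)
        (f := fun q : (Ω × G) × G => g q.2)
        (hg_meas.comp measurable_snd).stronglyMeasurable
    have h2 : StronglyMeasurable fun z : Ω × G =>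
        ∫ x, conj (f x) * (b (z.2 * x) : ℂ) ∂(κ z.1) := by
      exact MeasureTheory.StronglyMeasurable.integral_kernel_prod_right'
        (κ := κ.prodMkRight G)
        (f := fun q : (Ω × G) × G => conj (f q.2) * (b (q.1.2 * q.2) : ℂ))
        (((hconj_meas.comp (hf_meas.comp measurable_snd)).mul
          (Complex.measurable_ofReal.comp
            (hb_meas.comp (measurable_fst.snd.mul measurable_snd)))).stronglyMeasurable)
    exact h1.mul h2
  -- a.e. membership in A ×ˢ S for the product measure
  have hA0 : ℙ Aᶜ = 0 := by
    have := hAae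
    rwa [ae_iff] at this
  have hprod_ae : ∀ᵐ z ∂(ℙ.prod (m.restrict S)), z.1 ∈ A ∧ z.2 ∈ S := by
    rw [ae_iff]
    have h : {z : Ω × G | ¬(z.1 ∈ A ∧ z.2 ∈ S)} = (A ×ˢ S)ᶜ := by
      ext z; simp [Set.mem_prod]
    rw [h, Set.compl_prod_eq_union]
    refine le_antisymm (le_trans (measure_union_le _ _) ?_) zero_le
    rw [Measure.prod_prod, Measure.prod_prod, hA0, zero_mul]
    have h2 : (m.restrict S) Sᶜ = 0 := by
      rw [Measure.restrict_apply hSmeas.compl]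
      simp
    rw [h2, mul_zero, add_zero]
  -- a.e. strong measurability of P and Q on the product
  have hP_aesm : AEStronglyMeasurable (fun z : Ω × G => P z.2 z.1) (ℙ.prod (m.restrict S)) := by
    refine hPκ_sm.aestronglyMeasurable.congr ?_
    filter_upwards [hprod_ae] with z hz
    exact (hPPκ z hz.1 hz.2).symm
  have hQ_aesm : AEStronglyMeasurable (fun z : Ω × G => Q z.2 z.1) (ℙ.prod (m.restrict S)) := by
    refine hQκ_sm.aestronglyMeasurable.congr ?_
    filter_upwards [hprod_ae] with z hz
    exact (hQQκ z hz.1).symm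
  -- bounds
  have hfb_bound : ∀ s x : G, ‖conj (f (s⁻¹ * x)) * (b x : ℂ)‖ ≤ Cf * Cb := by
    intro s x
    rw [norm_mul, RCLike.norm_conj]
    exact mul_le_mul (hCf _) (hbnorm x) (norm_nonneg _) hCf0
  have hfbs_bound : ∀ s x : G, ‖conj (f x) * (b (s * x) : ℂ)‖ ≤ Cf * Cb := by
    intro s x
    rw [norm_mul, RCLike.norm_conj]
    exact mul_le_mul (hCf _) (hbnorm _) (norm_nonneg _) hCf0
  have hPbound : ∀ ω ∈ A, ∀ s ∈ S,
      ‖P s ω‖ ≤ (Cg * (Λ ω L).toReal) * (Cf * Cb * (Λ ω L).toReal) := by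
    intro ω hω s hs
    simp only [hPdef]
    rw [norm_mul]
    refine mul_le_mul ?_ ?_ (norm_nonneg _) (by positivity)
    · exact aux_norm_int _ (fun y => hCg _) hLmeas (hg_supp' s hs) (hΛL ω hω)
    · exact aux_norm_int _ (hfb_bound s) hLmeas (hfb_supp' s) (hΛL ω hω)
  have hQbound : ∀ ω ∈ A, ∀ s : G,
      ‖Q s ω‖ ≤ (Cg * (Λ ω L).toReal) * (Cf * Cb * (Λ ω L).toReal) := by
    intro ω hω s
    simp only [hQdef]
    rw [norm_mul]
    refine mul_le_mul ?_ ?_ (norm_nonneg _) (by positivity)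
    · exact aux_norm_int _ (fun y => hCg _) hLmeas hgL_supp (hΛL ω hω)
    · exact aux_norm_int _ (hfbs_bound s) hLmeas (hfbs_supp s) (hΛL ω hω)
  -- square integrability
  have hsq_int : Integrable (fun ω => ((Λ ω L).toReal) ^ 2) ℙ := by
    have hmeas2 : Measurable fun ω => ((Λ ω L).toReal) ^ 2 :=
      ((hΛmeas L hLmeas).ennreal_toReal).pow_const 2
    refine ⟨hmeas2.aestronglyMeasurable, ?_⟩
    have hfin : ∫⁻ ω, (‖((Λ ω L).toReal) ^ 2‖₊ : ℝ≥0∞) ∂ℙ < ⊤ := by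
      calc ∫⁻ ω, (‖((Λ ω L).toReal) ^ 2‖₊ : ℝ≥0∞) ∂ℙ ≤ ∫⁻ ω, (Λ ω L) ^ 2 ∂ℙ := by
            refine lintegral_mono fun ω => ?_
            by_cases hr : Λ ω L = ⊤
            · simp [hr]
            · refine le_of_eq ?_
              rw [← enorm_eq_nnnorm, Real.enorm_eq_ofReal (sq_nonneg _),
                ENNReal.ofReal_pow ENNReal.toReal_nonneg, ENNReal.ofReal_toReal hr]
        _ < ⊤ := hL2 L hLmeas ⟨DL, hDLc, hLDL⟩
    exact hfin
  -- integrability of P and Q on the product ℙ × m.restrict S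
  have hPint1 : ∀ᵐ ω ∂ℙ, Integrable (fun s => P s ω) (m.restrict S) := by
    filter_upwards [hAae] with ω hω
    refine aux_integrable (C := (Cg * (Λ ω L).toReal) * (Cf * Cb * (Λ ω L).toReal))
      ?_ hSmeas (by rwa [Measure.restrict_apply_self]) ?_
    · refine ((hPκ_sm.comp_measurable (show Measurable fun s : G => (ω, s) from
        measurable_const.prodMk measurable_id)).aestronglyMeasurable
        (μ := m.restrict S)).congr ?_
      filter_upwards [ae_restrict_mem hSmeas] with s hs
      exact (hPPκ (ω, s) hω hs).symm
    · filter_upwards [ae_restrict_mem hSmeas] with s hs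
      rw [Set.indicator_of_mem hs]
      exact hPbound ω hω s hs
  have hQint1 : ∀ᵐ ω ∂ℙ, Integrable (fun s => Q s ω) (m.restrict S) := by
    filter_upwards [hAae] with ω hω
    refine aux_integrable (C := (Cg * (Λ ω L).toReal) * (Cf * Cb * (Λ ω L).toReal))
      ?_ hSmeas (by rwa [Measure.restrict_apply_self]) ?_
    · refine ((hQκ_sm.comp_measurable (show Measurable fun s : G => (ω, s) from
        measurable_const.prodMk measurable_id)).aestronglyMeasurable
        (μ := m.restrict S)).congr ?_
      filter_upwards with s
      exact (hQQκ (ω, s) hω).symm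
    · filter_upwards [ae_restrict_mem hSmeas] with s hs
      rw [Set.indicator_of_mem hs]
      exact hQbound ω hω s
  have hdom_int : Integrable
      (fun ω => (m S).toReal * ((Cg * (Λ ω L).toReal) * (Cf * Cb * (Λ ω L).toReal))) ℙ := by
    have h := (hsq_int.const_mul ((m S).toReal * (Cg * (Cf * Cb))))
    refine h.congr ?_
    filter_upwards with ω
    ring
  have hPint : Integrable (Function.uncurry fun (ω : Ω) (s : G) => P s ω)
      (ℙ.prod (m.restrict S)) := by
    have hP_aesm' : AEStronglyMeasurable (Function.uncurry fun (ω : Ω) (s : G) => P s ω)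
        (ℙ.prod (m.restrict S)) := hP_aesm
    rw [integrable_prod_iff hP_aesm']
    refine ⟨hPint1, ?_⟩
    refine Integrable.mono' hdom_int (hP_aesm'.norm.integral_prod_right') ?_
    filter_upwards [hAae, hPint1] with ω hω hint
    show ‖∫ s, ‖P s ω‖ ∂(m.restrict S)‖ ≤ _
    rw [Real.norm_of_nonneg (integral_nonneg fun s => norm_nonneg _)]
    calc ∫ s, ‖P s ω‖ ∂(m.restrict S)
        ≤ ∫ _, (Cg * (Λ ω L).toReal) * (Cf * Cb * (Λ ω L).toReal) ∂(m.restrict S) := by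
          refine integral_mono_ae hint.norm (integrable_const _) ?_
          filter_upwards [ae_restrict_mem hSmeas] with s hs
          exact hPbound ω hω s hs
      _ = (m S).toReal * ((Cg * (Λ ω L).toReal) * (Cf * Cb * (Λ ω L).toReal)) := by
          rw [integral_const, measureReal_restrict_apply_univ, smul_eq_mul]; rfl
  have hQint : Integrable (Function.uncurry fun (ω : Ω) (s : G) => Q s ω)
      (ℙ.prod (m.restrict S)) := by
    have hQ_aesm' : AEStronglyMeasurable (Function.uncurry fun (ω : Ω) (s : G) => Q s ω)
        (ℙ.prod (m.restrict S)) := hQ_aesm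
    rw [integrable_prod_iff hQ_aesm']
    refine ⟨hQint1, ?_⟩
    refine Integrable.mono' hdom_int (hQ_aesm'.norm.integral_prod_right') ?_
    filter_upwards [hAae, hQint1] with ω hω hint
    show ‖∫ s, ‖Q s ω‖ ∂(m.restrict S)‖ ≤ _
    rw [Real.norm_of_nonneg (integral_nonneg fun s => norm_nonneg _)]
    calc ∫ s, ‖Q s ω‖ ∂(m.restrict S)
        ≤ ∫ _, (Cg * (Λ ω L).toReal) * (Cf * Cb * (Λ ω L).toReal) ∂(m.restrict S) := by
          refine integral_mono_ae hint.norm (integrable_const _) ?_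
          filter_upwards with s
          exact hQbound ω hω s
      _ = (m S).toReal * ((Cg * (Λ ω L).toReal) * (Cf * Cb * (Λ ω L).toReal)) := by
          rw [integral_const, measureReal_restrict_apply_univ, smul_eq_mul]; rfl
  -- Step 1
  have step1 : ∀ ω, ω ∈ A →
      (∫ x, (∫ y, (∫ t, conj (f t⁻¹) * g (t⁻¹ * (x⁻¹ * y)) ∂m) ∂(Λ ω)) * (b x : ℂ) ∂(Λ ω))
        = ∫ s in S, P s ω ∂m := by
    intro ω hω
    haveI := hAsig ω hω
    have h1a : ∀ x y : G, (∫ t, conj (f t⁻¹) * g (t⁻¹ * (x⁻¹ * y)) ∂m)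
        = ∫ s, conj (f (s⁻¹ * x)) * g (s⁻¹ * y) ∂m := by
      intro x y
      rw [← integral_mul_left_eq_self (fun t => conj (f t⁻¹) * g (t⁻¹ * (x⁻¹ * y))) x⁻¹]
      refine integral_congr_ae (Filter.Eventually.of_forall fun s => ?_)
      have e1 : (x⁻¹ * s)⁻¹ = s⁻¹ * x := by group
      have e2 : (x⁻¹ * s)⁻¹ * (x⁻¹ * y) = s⁻¹ * y := by group
      have e3 : s⁻¹ * x * (x⁻¹ * y) = s⁻¹ * y := by group
      simp only [e2, e1, e3]
    have hper : ∀ x : G,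
        (∫ y, (∫ s, conj (f (s⁻¹ * x)) * g (s⁻¹ * y) ∂m) ∂(Λ ω)) * (b x : ℂ)
          = ∫ s in S, ((∫ y, g (s⁻¹ * y) ∂(Λ ω)) * (conj (f (s⁻¹ * x)) * (b x : ℂ))) ∂m := by
      intro x
      by_cases hbx : b x = 0
      · simp [hbx]
      · have hxKb : x ∈ Kb := hKbs hbx
        obtain ⟨Ts, hTsm, hTs1, Ds, hDsc, hTsDs⟩ :=
          gadget ({x} * Kf⁻¹) (isCompact_singleton.mul hKfc.inv)
        obtain ⟨Ty, hTym, hTy1, Dy, hDyc, hTyDy⟩ :=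
          gadget ({x} * Kf⁻¹ * Kg) ((isCompact_singleton.mul hKfc.inv).mul hKgc)
        have hsupp_s : ∀ s : G, f (s⁻¹ * x) ≠ 0 → s ∈ ({x} : Set G) * Kf⁻¹ := by
          intro s hne
          have h1 : s⁻¹ * x ∈ Kf := hKfs hne
          have h2 : s = x * (s⁻¹ * x)⁻¹ := by group
          rw [h2]
          exact Set.mul_mem_mul (Set.mem_singleton x) (Set.inv_mem_inv.2 h1)
        have hint : Integrable
            (Function.uncurry fun (y : G) (s : G) => conj (f (s⁻¹ * x)) * g (s⁻¹ * y))
            ((Λ ω).prod m) := by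
          refine aux_integrable (C := Cf * Cg) ?_ (hTym.prod hTsm) ?_ ?_
          · exact (((hconj_meas.comp (hf_meas.comp (measurable_snd.inv.mul_const x))).mul
              (hg_meas.comp
                (measurable_snd.inv.mul measurable_fst))).stronglyMeasurable).aestronglyMeasurable
          · rw [Measure.prod_prod]
            exact ENNReal.mul_lt_top
              (lt_of_le_of_lt (measure_mono hTyDy) (hAfin ω hω Dy hDyc))
              (lt_of_le_of_lt (measure_mono hTsDs) hDsc.measure_lt_top)
          · refine Filter.Eventually.of_forall fun z => ?_
            show ‖conj (f (z.2⁻¹ * x)) * g (z.2⁻¹ * z.1)‖ ≤ _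
            by_cases hz : z ∈ Ty ×ˢ Ts
            · rw [Set.indicator_of_mem hz, norm_mul, RCLike.norm_conj]
              exact mul_le_mul (hCf _) (hCg _) (norm_nonneg _) hCf0
            · rw [Set.indicator_of_notMem hz]
              by_cases hfz : f (z.2⁻¹ * x) = 0
              · rw [hfz]; simp
              · by_cases hgz : g (z.2⁻¹ * z.1) = 0
                · rw [hgz]; simp
                · exfalso
                  apply hz
                  have hs : z.2 ∈ ({x} : Set G) * Kf⁻¹ := hsupp_s z.2 hfz
                  have hy : z.1 ∈ ({x} : Set G) * Kf⁻¹ * Kg := by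
                    have h1 : z.2⁻¹ * z.1 ∈ Kg := hKgs hgz
                    have h2 : z.1 = z.2 * (z.2⁻¹ * z.1) := by group
                    rw [h2]
                    exact Set.mul_mem_mul hs h1
                  exact Set.mem_prod.mpr ⟨hTy1 hy, hTs1 hs⟩
        have hsw : (∫ y, (∫ s, conj (f (s⁻¹ * x)) * g (s⁻¹ * y) ∂m) ∂(Λ ω))
            = ∫ s, (∫ y, conj (f (s⁻¹ * x)) * g (s⁻¹ * y) ∂(Λ ω)) ∂m :=
          integral_integral_swap (f := fun y s => conj (f (s⁻¹ * x)) * g (s⁻¹ * y)) hint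
        have hres : ∫ s, (∫ y, conj (f (s⁻¹ * x)) * g (s⁻¹ * y) ∂(Λ ω)) ∂m
            = ∫ s in S, (∫ y, conj (f (s⁻¹ * x)) * g (s⁻¹ * y) ∂(Λ ω)) ∂m := by
          symm
          refine setIntegral_eq_integral_of_forall_compl_eq_zero fun s hs => ?_
          have hf0 : f (s⁻¹ * x) = 0 := by
            by_contra hne
            exact hs (hSsub (Set.mul_subset_mul_right
              (Set.singleton_subset_iff.2 hxKb) (hsupp_s s hne)))
          rw [hf0]
          simp
        rw [hsw, hres, ← integral_mul_const]
        refine integral_congr_ae (Filter.Eventually.of_forall fun s => ?_)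
        show (∫ y, conj (f (s⁻¹ * x)) * g (s⁻¹ * y) ∂(Λ ω)) * (b x : ℂ)
            = (∫ y, g (s⁻¹ * y) ∂(Λ ω)) * (conj (f (s⁻¹ * x)) * (b x : ℂ))
        rw [integral_const_mul]
        ring
    obtain ⟨Tb, hTbm, hKbTb, Db, hDbc, hTbDb⟩ := gadget Kb hKbc
    have hprod_ae2 : ∀ᵐ z ∂((Λ ω).prod (m.restrict S)), z.2 ∈ S := by
      rw [ae_iff]
      have h : {z : G × G | ¬ z.2 ∈ S} = (Set.univ : Set G) ×ˢ Sᶜ := by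
        ext z; simp
      rw [h, Measure.prod_prod, Measure.restrict_apply hSmeas.compl]
      simp
    have hbigint : Integrable
        (Function.uncurry fun (x : G) (s : G) =>
          (∫ y, g (s⁻¹ * y) ∂(Λ ω)) * (conj (f (s⁻¹ * x)) * (b x : ℂ)))
        ((Λ ω).prod (m.restrict S)) := by
      refine aux_integrable (C := (Cg * (Λ ω L).toReal) * (Cf * Cb)) ?_
        (hTbm.prod MeasurableSet.univ) ?_ ?_
      · have hsm1 : StronglyMeasurable fun s : G => ∫ y, g (s⁻¹ * y) ∂(Λ ω) := by
          refine MeasureTheory.StronglyMeasurable.integral_prod_right' (ν := Λ ω)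
            (f := fun p : G × G => g (p.1⁻¹ * p.2)) ?_
          exact (hg_meas.comp (measurable_fst.inv.mul measurable_snd)).stronglyMeasurable
        exact ((hsm1.comp_measurable measurable_snd).mul
          (((hconj_meas.comp (hf_meas.comp (measurable_snd.inv.mul measurable_fst))).mul
            (Complex.measurable_ofReal.comp
              (hb_meas.comp measurable_fst))).stronglyMeasurable)).aestronglyMeasurable
      · rw [Measure.prod_prod, Measure.restrict_apply_univ]
        exact ENNReal.mul_lt_top (lt_of_le_of_lt (measure_mono hTbDb) (hAfin ω hω Db hDbc)) hmS
      · filter_upwards [hprod_ae2] with z hz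
        show ‖(∫ y, g (z.2⁻¹ * y) ∂(Λ ω)) * (conj (f (z.2⁻¹ * z.1)) * (b z.1 : ℂ))‖ ≤ _
        by_cases hzb : z.1 ∈ Tb
        · rw [Set.indicator_of_mem (Set.mem_prod.mpr ⟨hzb, Set.mem_univ _⟩), norm_mul]
          refine mul_le_mul ?_ ?_ (norm_nonneg _) (mul_nonneg hCg0 ENNReal.toReal_nonneg)
          · exact aux_norm_int _ (fun y => hCg _) hLmeas (hg_supp' z.2 hz) (hΛL ω hω)
          · exact hfb_bound z.2 z.1
        · rw [Set.indicator_of_notMem (fun hc => hzb (Set.mem_prod.mp hc).1)]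
          have hb0 : b z.1 = 0 := by
            by_contra hne; exact hzb (hKbTb (hKbs hne))
          rw [hb0]
          simp
    calc (∫ x, (∫ y, (∫ t, conj (f t⁻¹) * g (t⁻¹ * (x⁻¹ * y)) ∂m) ∂(Λ ω)) * (b x : ℂ) ∂(Λ ω))
        = ∫ x, (∫ s in S, ((∫ y, g (s⁻¹ * y) ∂(Λ ω)) * (conj (f (s⁻¹ * x)) * (b x : ℂ))) ∂m)
            ∂(Λ ω) := by
          refine integral_congr_ae (Filter.Eventually.of_forall fun x => ?_)
          show (∫ y, (∫ t, conj (f t⁻¹) * g (t⁻¹ * (x⁻¹ * y)) ∂m) ∂(Λ ω)) * (b x : ℂ)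
              = ∫ s in S, ((∫ y, g (s⁻¹ * y) ∂(Λ ω)) * (conj (f (s⁻¹ * x)) * (b x : ℂ))) ∂m
          rw [← hper x]
          congr 1
          refine integral_congr_ae (Filter.Eventually.of_forall fun y => ?_)
          show (∫ t, conj (f t⁻¹) * g (t⁻¹ * (x⁻¹ * y)) ∂m)
              = ∫ s, conj (f (s⁻¹ * x)) * g (s⁻¹ * y) ∂m
          exact h1a x y
      _ = ∫ s in S, (∫ x, ((∫ y, g (s⁻¹ * y) ∂(Λ ω)) * (conj (f (s⁻¹ * x)) * (b x : ℂ))) ∂(Λ ω))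
            ∂m := integral_integral_swap (f := fun x s =>
              (∫ y, g (s⁻¹ * y) ∂(Λ ω)) * (conj (f (s⁻¹ * x)) * (b x : ℂ))) hbigint
      _ = ∫ s in S, P s ω ∂m := by
          refine integral_congr_ae (Filter.Eventually.of_forall fun s => ?_)
          simp only [hPdef]
          rw [integral_const_mul]
  -- Step 3
  have step3 : ∀ s : G, ∫ ω, P s ω ∂ℙ = ∫ ω, Q s ω ∂ℙ := by
    intro s
    have hemb : MeasurableEmbedding (fun ω : Ω => s⁻¹ • ω) :=
      MeasurableEquiv.measurableEmbedding
        { toFun := fun ω => s⁻¹ • ω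
          invFun := fun ω => s • ω
          left_inv := fun ω => smul_inv_smul s ω
          right_inv := fun ω => inv_smul_smul s ω
          measurable_toFun := hact s⁻¹
          measurable_invFun := hact s }
    have h1 : ∀ ω, Q s (s⁻¹ • ω) = P s ω := by
      intro ω
      simp only [hQdef, hPdef]
      rw [hequiv s⁻¹ ω]
      have hm : Measure.map (fun x => s⁻¹ * x) (Λ ω)
          = Measure.map (MeasurableEquiv.mulLeft s⁻¹) (Λ ω) := by
        rw [MeasurableEquiv.coe_mulLeft]
      rw [hm, integral_map_equiv, integral_map_equiv]
      simp only [MeasurableEquiv.coe_mulLeft, mul_inv_cancel_left]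
    calc ∫ ω, P s ω ∂ℙ = ∫ ω, Q s (s⁻¹ • ω) ∂ℙ :=
          integral_congr_ae (Filter.Eventually.of_forall fun ω => (h1 ω).symm)
      _ = ∫ ω, Q s ω ∂ℙ := (hpres s⁻¹).integral_comp hemb (Q s)
  -- Step 5
  have step5 : ∀ ω, ω ∈ A →
      ∫ s in S, Q s ω ∂m = conj (∫ x, f x ∂(Λ ω)) * ∫ x, g x ∂(Λ ω) := by
    intro ω hω
    haveI := hAsig ω hω
    have h0 : ∫ s in S, Q s ω ∂m
        = (∫ y, g y ∂(Λ ω)) * ∫ s in S, (∫ x, conj (f x) * (b (s * x) : ℂ) ∂(Λ ω)) ∂m := by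
      rw [← integral_const_mul]
    obtain ⟨Tf, hTfm, hKfTf, Df, hDfc, hTfDf⟩ := gadget Kf hKfc
    have hswap : ∫ s in S, (∫ x, conj (f x) * (b (s * x) : ℂ) ∂(Λ ω)) ∂m
        = ∫ x, (∫ s in S, conj (f x) * (b (s * x) : ℂ) ∂m) ∂(Λ ω) := by
      refine integral_integral_swap (f := fun s x => conj (f x) * (b (s * x) : ℂ)) ?_
      refine aux_integrable (C := Cf * Cb) ?_ (MeasurableSet.univ.prod hTfm) ?_ ?_
      · exact (((hconj_meas.comp (hf_meas.comp measurable_snd)).mul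
          (Complex.measurable_ofReal.comp
            (hb_meas.comp
              (measurable_fst.mul measurable_snd)))).stronglyMeasurable).aestronglyMeasurable
      · rw [Measure.prod_prod, Measure.restrict_apply_univ]
        exact ENNReal.mul_lt_top hmS (lt_of_le_of_lt (measure_mono hTfDf) (hAfin ω hω Df hDfc))
      · refine Filter.Eventually.of_forall fun z => ?_
        show ‖conj (f z.2) * (b (z.1 * z.2) : ℂ)‖ ≤ _
        by_cases hz : z.2 ∈ Tf
        · rw [Set.indicator_of_mem (Set.mem_prod.mpr ⟨Set.mem_univ _, hz⟩)]
          exact hfbs_bound z.1 z.2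
        · rw [Set.indicator_of_notMem (fun hc => hz (Set.mem_prod.mp hc).2)]
          have hf0 : f z.2 = 0 := by
            by_contra hne; exact hz (hKfTf (hKfs hne))
          rw [hf0]
          simp
    have hpt : ∀ x : G, (∫ s in S, conj (f x) * (b (s * x) : ℂ) ∂m) = conj (f x) := by
      intro x
      by_cases hfx : f x = 0
      · simp [hfx]
      · have hxKf : x ∈ Kf := hKfs hfx
        rw [integral_const_mul]
        have h1 : ∫ s in S, ((b (s * x) : ℝ) : ℂ) ∂m = ∫ s, ((b (s * x) : ℝ) : ℂ) ∂m := by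
          refine setIntegral_eq_integral_of_forall_compl_eq_zero fun s hs => ?_
          have hb0 : b (s * x) = 0 := by
            by_contra hne
            refine hs (hSsub ?_)
            have h2 : s * x ∈ Kb := hKbs hne
            have h3 : s = (s * x) * x⁻¹ := by group
            rw [h3]
            exact Set.mul_mem_mul h2 (Set.inv_mem_inv.2 hxKf)
          rw [hb0, Complex.ofReal_zero]
        rw [h1]
        have h2 : ∫ s, ((b (s * x) : ℝ) : ℂ) ∂m = ((∫ s, b (s * x) ∂m : ℝ) : ℂ) :=
          integral_ofReal
        rw [h2, integral_mul_right_eq_self (fun s => b s) x, hb_int, Complex.ofReal_one, mul_one]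
    rw [h0, hswap, integral_congr_ae (Filter.Eventually.of_forall hpt), integral_conj]
    exact mul_comm _ _
  -- assembly
  calc ∫ ω, (∫ x, (∫ y, (∫ t, conj (f t⁻¹) * g (t⁻¹ * (x⁻¹ * y)) ∂m)
          ∂(Λ ω)) * (b x : ℂ) ∂(Λ ω)) ∂ℙ
      = ∫ ω, ∫ s in S, P s ω ∂m ∂ℙ := by
        refine integral_congr_ae ?_
        filter_upwards [hAae] with ω hω
        exact step1 ω hω
    _ = ∫ s in S, ∫ ω, P s ω ∂ℙ ∂m :=
        integral_integral_swap hPint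
    _ = ∫ s in S, ∫ ω, Q s ω ∂ℙ ∂m :=
        integral_congr_ae (Filter.Eventually.of_forall fun s => step3 s)
    _ = ∫ ω, ∫ s in S, Q s ω ∂m ∂ℙ :=
        (integral_integral_swap hQint).symm
    _ = ∫ ω, conj (∫ x, f x ∂(Λ ω)) * ∫ x, g x ∂(Λ ω) ∂ℙ := by
        refine integral_congr_ae ?_
        filter_upwards [hAae] with ω hω
        exact step5 ω hω
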